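/- Let L : ℝ[X] → ℝ[X] be a linear map that is skew symmetric with respect to the inner product, i.e. ⟨L f, g⟩ = −⟨f, L g⟩ for all polynomials f, g, and that satisfies L(x^n) = γ_n x^{n+1} + (terms of degree ≤ n) with γ_n ≠ 0 for every n ≥ 0. Then for every n ≥ 1 the raising relation γ_{n−1} (x − B_n) p_n(x) + (L p_n)(x) = (γ_n + γ_{n−1}) A_n p_{n+1}(x) holds. -/

import Mathlib

open Polynomial MeasureTheory

/-- **Raising relation** (Proposition 2.1, raising relation part). -/
theorem raising_relation_skew_symmetric
    (μ : Measure ℝ)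
    (hint : ∀ f : ℝ[X], Integrable (fun x => f.eval x) μ)
    (p : ℕ → ℝ[X]) (k h A B Cc : ℕ → ℝ)
    (hdeg : ∀ n, (p n).degree = n)
    (hlead : ∀ n, (p n).leadingCoeff = k n)
    (hk : ∀ n, k n ≠ 0)
    (hh : ∀ n, 0 < h n)
    (horth : ∀ n m, (∫ x, (p n).eval x * (p m).eval x ∂μ) = if n = m then h n else 0)
    (hA : ∀ n, A n = k n / k (n + 1))
    (hC : ∀ n, 1 ≤ n → Cc n = A (n - 1) * h n / h (n - 1))
    (hrec : ∀ n, X * p n =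
      C (A n) * p (n + 1) + C (B n) * p n +
        C (Cc n) * (if n = 0 then 0 else p (n - 1)))
    (L : ℝ[X] →ₗ[ℝ] ℝ[X]) (γ : ℕ → ℝ)
    (hskew : ∀ f g : ℝ[X],
      (∫ x, (L f).eval x * g.eval x ∂μ) = - ∫ x, f.eval x * (L g).eval x ∂μ)
    (hγ : ∀ n, γ n ≠ 0)
    (hLdeg : ∀ n : ℕ, ∃ r : ℝ[X], r.degree ≤ (n : ℕ) ∧
      L (X ^ n) = C (γ n) * X ^ (n + 1) + r) :
    ∀ n : ℕ, 1 ≤ n →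
      C (γ (n - 1)) * (X - C (B n)) * p n + L (p n) =
        C ((γ n + γ (n - 1)) * A n) * p (n + 1) := by
  -- basic consequences
  have hnd : ∀ n : ℕ, (p n).natDegree = n := fun n =>
    natDegree_eq_of_degree_eq_some (hdeg n)
  have hcoeff : ∀ n : ℕ, (p n).coeff n = k n := by
    intro n
    have := hlead n
    rwa [leadingCoeff, hnd n] at this
  have hint2 : ∀ f g : ℝ[X], Integrable (fun x => f.eval x * g.eval x) μ := by
    intro f g
    simpa using hint (f * g)
  -- bilinearity of the inner product
  have ipadd : ∀ r f g : ℝ[X], (∫ x, r.eval x * (f + g).eval x ∂μ)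
      = (∫ x, r.eval x * f.eval x ∂μ) + ∫ x, r.eval x * g.eval x ∂μ := by
    intro r f g
    simp only [eval_add, mul_add]
    exact integral_add (hint2 r f) (hint2 r g)
  have ipC : ∀ (c : ℝ) (r f : ℝ[X]), (∫ x, r.eval x * (C c * f).eval x ∂μ)
      = c * ∫ x, r.eval x * f.eval x ∂μ := by
    intro c r f
    simp only [eval_mul, eval_C]
    rw [← smul_eq_mul, ← integral_smul]
    congr 1; funext x; simp [smul_eq_mul]; ring
  have ipcomm : ∀ f g : ℝ[X], (∫ x, f.eval x * g.eval x ∂μ)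
      = ∫ x, g.eval x * f.eval x ∂μ := by
    intro f g
    congr 1; funext x; ring
  have horth' : ∀ n m : ℕ, n ≠ m → (∫ x, (p n).eval x * (p m).eval x ∂μ) = 0 := by
    intro n m hnm; rw [horth n m, if_neg hnm]
  -- orthogonality to lower-degree polynomials
  have orth_lt : ∀ (n : ℕ) (f : ℝ[X]), f.degree < (n : ℕ) →
      (∫ x, (p n).eval x * f.eval x ∂μ) = 0 := by
    intro n
    suffices H : ∀ N : ℕ, ∀ f : ℝ[X], f.natDegree ≤ N → f.degree < (n : ℕ) →
        (∫ x, (p n).eval x * f.eval x ∂μ) = 0 by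
      intro f hf; exact H f.natDegree f le_rfl hf
    intro N
    induction N using Nat.strong_induction_on with
    | _ N IH =>
      intro f hfN hfn
      by_cases hf0 : f = 0
      · simp [hf0]
      · set d := f.natDegree with hd
        set c := f.coeff d / k d with hc
        set g := f - C c * p d with hg
        have hdn : d < n := by
          have := hfn
          rw [degree_eq_natDegree hf0] at this
          exact_mod_cast this
        have hgd : g.degree < (d : ℕ) := by
          rw [degree_lt_iff_coeff_zero]
          intro i hi
          rcases eq_or_lt_of_le hi with hi' | hi'
          · subst hi'
            simp only [hg, coeff_sub, coeff_C_mul, hcoeff d, hc]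
            rw [div_mul_cancel₀ _ (hk d), sub_self]
          · simp only [hg, coeff_sub, coeff_C_mul]
            rw [coeff_eq_zero_of_natDegree_lt hi',
              coeff_eq_zero_of_natDegree_lt (by rw [hnd d]; exact hi'), mul_zero, sub_zero]
        have hfg : f = g + C c * p d := by rw [hg]; ring
        rw [hfg, ipadd, ipC, horth' n d (Nat.ne_of_lt hdn).symm, mul_zero, add_zero]
        by_cases hg0 : g = 0
        · simp [hg0]
        · have hgnat : g.natDegree < d := (natDegree_lt_iff_degree_lt hg0).mpr hgd
          exact IH g.natDegree (lt_of_lt_of_le hgnat hfN) g le_rfl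
            (lt_trans hgd (by exact_mod_cast hdn))
  -- the inner product against `p m` of a polynomial of degree at most `m`
  have ip_coeff : ∀ (m : ℕ) (f : ℝ[X]), f.degree ≤ (m : ℕ) →
      (∫ x, (p m).eval x * f.eval x ∂μ) = f.coeff m * h m / k m := by
    intro m f hf
    set c := f.coeff m / k m with hc
    set g := f - C c * p m with hg
    have hgd : g.degree < (m : ℕ) := by
      rw [degree_lt_iff_coeff_zero]
      intro i hi
      rcases eq_or_lt_of_le hi with hi' | hi'
      · subst hi'
        simp only [hg, coeff_sub, coeff_C_mul, hcoeff m, hc]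
        rw [div_mul_cancel₀ _ (hk m), sub_self]
      · simp only [hg, coeff_sub, coeff_C_mul]
        rw [coeff_eq_zero_of_degree_lt (lt_of_le_of_lt hf (by exact_mod_cast hi')),
          coeff_eq_zero_of_natDegree_lt (by rw [hnd m]; exact hi'), mul_zero, sub_zero]
    have hfg : f = g + C c * p m := by rw [hg]; ring
    rw [hfg, ipadd, ipC, orth_lt m g hgd, horth m m, if_pos rfl, hc, zero_add]
    rw [coeff_add, coeff_C_mul, hcoeff m, coeff_eq_zero_of_degree_lt hgd, zero_add, div_mul_cancel₀ _ (hk m)]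
    ring
  -- a polynomial of degree ≤ N orthogonal to p_0,…,p_N vanishes
  have eqzero : ∀ (N : ℕ) (q : ℝ[X]), q.degree ≤ (N : ℕ) →
      (∀ j, j ≤ N → (∫ x, (p j).eval x * q.eval x ∂μ) = 0) → q = 0 := by
    intro N
    induction N with
    | zero =>
      intro q hq hip
      have h0 := ip_coeff 0 q hq
      rw [hip 0 le_rfl] at h0
      have : q.coeff 0 = 0 := by
        field_simp [hk 0, (hh 0).ne'] at h0
        exact (mul_eq_zero.mp (show q.coeff 0 * h 0 = 0 by linarith)).resolve_right (hh 0).ne'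
      rw [eq_C_of_degree_le_zero hq, this, map_zero]
    | succ N IH =>
      intro q hq hip
      have h0 := ip_coeff (N + 1) q hq
      rw [hip (N + 1) le_rfl] at h0
      have hc0 : q.coeff (N + 1) = 0 := by
        field_simp [hk (N + 1), (hh (N + 1)).ne'] at h0
        exact (mul_eq_zero.mp (show q.coeff (N + 1) * h (N + 1) = 0 by linarith)).resolve_right (hh (N + 1)).ne'
      have hq' : q.degree ≤ (N : ℕ) := by
        rw [degree_le_iff_coeff_zero]
        intro i hi
        have hi' : N < i := by exact_mod_cast hi
        rcases eq_or_lt_of_le (Nat.succ_le_of_lt hi') with hi'' | hi''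
        · rw [← hi'']; exact hc0
        · exact coeff_eq_zero_of_degree_lt (lt_of_le_of_lt hq (by exact_mod_cast hi''))
      exact IH q hq' fun j hj => hip j (le_trans hj (Nat.le_succ N))
  -- degree bound for L on monomials
  have hLdeg' : ∀ m : ℕ, (L (X ^ m)).degree ≤ ((m + 1 : ℕ) : WithBot ℕ) := by
    intro m
    obtain ⟨r, hr, hLr⟩ := hLdeg m
    rw [hLr]
    refine le_trans (degree_add_le _ _) (max_le ?_ ?_)
    · rw [degree_C_mul_X_pow (m + 1) (hγ m)]
    · exact le_trans hr (by exact_mod_cast Nat.le_succ m)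
  -- degree bound for L in general
  have Ldeg : ∀ (N : ℕ) (f : ℝ[X]), f.degree ≤ (N : ℕ) →
      (L f).degree ≤ ((N + 1 : ℕ) : WithBot ℕ) := by
    intro N
    induction N with
    | zero =>
      intro f hf
      have hf' : f = f.coeff 0 • (X ^ 0 : ℝ[X]) := by
        rw [eq_C_of_degree_le_zero hf]; simp [smul_eq_C_mul]
      rw [hf', L.map_smul]
      exact le_trans (degree_smul_le _ _) (hLdeg' 0)
    | succ N IH =>
      intro f hf
      set c := f.coeff (N + 1) with hc
      set g := f - c • X ^ (N + 1) with hg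
      have hgd : g.degree ≤ (N : ℕ) := by
        rw [degree_le_iff_coeff_zero]
        intro i hi
        have hi' : N + 1 ≤ i := by exact_mod_cast hi
        rcases eq_or_lt_of_le hi' with hi'' | hi''
        · subst hi''
          simp [hg, coeff_smul, coeff_X_pow, hc]
        · simp only [hg, coeff_sub, coeff_smul, coeff_X_pow, smul_eq_mul]
          rw [coeff_eq_zero_of_degree_lt (lt_of_le_of_lt hf (by exact_mod_cast hi'')),
            if_neg (by omega), mul_zero, sub_zero]
      have hfg : f = g + c • X ^ (N + 1) := by rw [hg]; ring
      rw [hfg, map_add, L.map_smul]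
      refine le_trans (degree_add_le _ _) (max_le ?_ ?_)
      · exact le_trans (IH g hgd) (by exact_mod_cast Nat.le_succ (N + 1))
      · exact le_trans (degree_smul_le _ _) (hLdeg' (N + 1))
  -- leading coefficient of L f
  have Lcoeff : ∀ (N : ℕ) (f : ℝ[X]), f.degree ≤ (N : ℕ) →
      (L f).coeff (N + 1) = γ N * f.coeff N := by
    intro N f hf
    set c := f.coeff N with hc
    set g := f - c • X ^ N with hg
    have hgd : g.degree < (N : ℕ) := by
      rw [degree_lt_iff_coeff_zero]
      intro i hi
      rcases eq_or_lt_of_le hi with hi' | hi'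
      · subst hi'
        simp [hg, coeff_smul, coeff_X_pow, hc]
      · simp only [hg, coeff_sub, coeff_smul, coeff_X_pow, smul_eq_mul]
        rw [coeff_eq_zero_of_degree_lt (lt_of_le_of_lt hf (by exact_mod_cast hi')),
          if_neg (by omega), mul_zero, sub_zero]
    have hLg : (L g).coeff (N + 1) = 0 := by
      by_cases hg0 : g = 0
      · simp [hg0]
      · have h1 : g.natDegree < N := (natDegree_lt_iff_degree_lt hg0).mpr hgd
        have h2 : (L g).degree ≤ ((g.natDegree + 1 : ℕ) : WithBot ℕ) :=
          Ldeg g.natDegree g (degree_le_natDegree)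
        refine coeff_eq_zero_of_degree_lt (lt_of_le_of_lt h2 ?_)
        exact_mod_cast Nat.succ_lt_succ h1
    have hLX : (L (X ^ N)).coeff (N + 1) = γ N := by
      obtain ⟨r, hr, hLr⟩ := hLdeg N
      rw [hLr, coeff_add, coeff_C_mul, coeff_X_pow, if_pos rfl,
        coeff_eq_zero_of_degree_lt (lt_of_le_of_lt hr (by exact_mod_cast Nat.lt_succ_self N))]
      ring
    have hfg : f = g + c • X ^ N := by rw [hg]; ring
    rw [hfg, map_add, L.map_smul, coeff_add, hLg, coeff_smul, hLX, smul_eq_mul, zero_add]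
    ring
  -- main argument
  intro n hn
  obtain ⟨m, rfl⟩ : ∃ m, n = m + 1 := ⟨n - 1, (Nat.succ_pred_eq_of_pos hn).symm⟩
  simp only [Nat.add_sub_cancel]
  rw [← sub_eq_zero]
  set q := C (γ m) * (X - C (B (m + 1))) * p (m + 1) + L (p (m + 1))
      - C ((γ (m + 1) + γ m) * A (m + 1)) * p (m + 1 + 1) with hq
  show q = 0
  -- degree bound on q
  have hqdeg : q.degree ≤ ((m + 2 : ℕ) : WithBot ℕ) := by
    refine le_trans (degree_sub_le _ _)
      (max_le (le_trans (degree_add_le _ _) (max_le ?_ ?_)) ?_)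
    · refine le_trans (degree_mul_le _ _) ?_
      rw [hdeg (m + 1)]
      refine le_trans (add_le_add_left (degree_mul_le _ _) _) ?_
      refine le_trans (add_le_add_left (add_le_add degree_C_le (degree_X_sub_C (B (m+1))).le) _) ?_
      rw [zero_add]
      exact_mod_cast (by omega : 1 + (m + 1) ≤ m + 2)
    · rw [show ((m + 2 : ℕ) : WithBot ℕ) = (((m + 1) + 1 : ℕ) : WithBot ℕ) by norm_cast]
      exact Ldeg (m + 1) (p (m + 1)) (hdeg (m + 1)).le
    · refine le_trans (degree_mul_le _ _) ?_
      rw [hdeg (m + 1 + 1)]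
      refine le_trans (add_le_add_left degree_C_le _) ?_
      rw [zero_add]
  -- inner products of q against p_j vanish
  have hipq : ∀ j, j ≤ m + 2 → (∫ x, (p j).eval x * q.eval x ∂μ) = 0 := by
    intro j hj
    have hqsplit : q = C (γ m) * (X * p (m + 1)) + (C (-(γ m * B (m + 1))) * p (m + 1)
        + (L (p (m + 1)) + C (-((γ (m + 1) + γ m) * A (m + 1))) * p (m + 1 + 1))) := by
      rw [hq]; simp only [map_neg, map_mul]; ring
    have hxp : (∫ x, (p j).eval x * (X * p (m + 1)).eval x ∂μ)
        = A (m + 1) * (∫ x, (p j).eval x * (p (m + 2)).eval x ∂μ)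
          + (B (m + 1) * (∫ x, (p j).eval x * (p (m + 1)).eval x ∂μ)
            + Cc (m + 1) * ∫ x, (p j).eval x * (p m).eval x ∂μ) := by
      rw [hrec (m + 1)]
      simp only [Nat.add_sub_cancel, if_neg (Nat.succ_ne_zero m)]
      rw [add_assoc, ipadd, ipadd, ipC, ipC, ipC]
    have hS : (∫ x, (p j).eval x * (L (p (m + 1))).eval x ∂μ)
        = - ∫ x, (p (m + 1)).eval x * (L (p j)).eval x ∂μ := by
      rw [ipcomm, hskew]
    rw [hqsplit, ipadd, ipadd, ipadd, ipC, ipC, ipC, hxp, hS]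
    simp only [show m + 1 + 1 = m + 2 from rfl]
    -- case analysis on j
    by_cases hj2 : j = m + 2
    · subst hj2
      have e1 : (∫ x, (p (m + 2)).eval x * (p (m + 2)).eval x ∂μ) = h (m + 2) := by
        rw [horth, if_pos rfl]
      have e2 := horth' (m + 2) (m + 1) (by omega)
      have e3 := horth' (m + 2) m (by omega)
      have eS : (∫ x, (p (m + 1)).eval x * (L (p (m + 2))).eval x ∂μ)
          = -(γ (m + 1) * k (m + 1) * h (m + 2) / k (m + 2)) := by
        rw [ipcomm, hskew, ip_coeff (m + 2) (L (p (m + 1)))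
            (by rw [show ((m + 2 : ℕ) : WithBot ℕ) = (((m + 1) + 1 : ℕ) : WithBot ℕ) by norm_cast]
                exact Ldeg (m + 1) _ (hdeg (m + 1)).le)]
        rw [show m + 2 = (m + 1) + 1 from rfl, Lcoeff (m + 1) _ (hdeg (m + 1)).le, hcoeff]
      rw [e1, e2, e3, eS, hA (m + 1)]
      field_simp [hk (m + 2)]
      ring
    · by_cases hj1 : j = m + 1
      · subst hj1
        have e1 := horth' (m + 1) (m + 2) (by omega)
        have e2 : (∫ x, (p (m + 1)).eval x * (p (m + 1)).eval x ∂μ) = h (m + 1) := by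
          rw [horth, if_pos rfl]
        have e3 := horth' (m + 1) m (by omega)
        have eS : (∫ x, (p (m + 1)).eval x * (L (p (m + 1))).eval x ∂μ) = 0 := by
          have h1 := hskew (p (m + 1)) (p (m + 1))
          rw [ipcomm (L (p (m + 1))) (p (m + 1))] at h1
          linarith
        rw [e1, e2, e3, eS]
        ring
      · by_cases hjm : j = m
        · subst hjm
          have e1 := horth' j (j + 2) (by omega)
          have e2 := horth' j (j + 1) (by omega)
          have e3 : (∫ x, (p j).eval x * (p j).eval x ∂μ) = h j := by
            rw [horth, if_pos rfl]
          have eS : (∫ x, (p (j + 1)).eval x * (L (p j)).eval x ∂μ)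
              = γ j * k j * h (j + 1) / k (j + 1) := by
            rw [ip_coeff (j + 1) (L (p j)) (Ldeg j _ (hdeg j).le),
              Lcoeff j _ (hdeg j).le, hcoeff]
          rw [e1, e2, e3, eS, hC (j + 1) (by omega)]
          simp only [Nat.add_sub_cancel]
          rw [hA j]
          field_simp [(hh j).ne', hk (j + 1)]
          ring
        · have hjlt : j < m := by omega
          have e1 := horth' j (m + 2) (by omega)
          have e2 := horth' j (m + 1) (by omega)
          have e3 := horth' j m (by omega)
          have eS : (∫ x, (p (m + 1)).eval x * (L (p j)).eval x ∂μ) = 0 := by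
            refine orth_lt (m + 1) (L (p j)) ?_
            refine lt_of_le_of_lt (Ldeg j _ (hdeg j).le) ?_
            exact_mod_cast (by omega : j + 1 < m + 1)
          rw [e1, e2, e3, eS]
          ring
  exact eqzero (m + 2) q hqdeg hipq
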